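/- Let p ≥ 3 be an integer. The function h(Z) = Z^{2(p−2)}·((p−2) − (p−1)Z²), proportional to the square of the saddle-point Lyapunov exponent of the pTaT flow expressed through the saddle position Z, attains its unique maximum on the interval (0,1) at Z_LE = (p−2)/(p−1). Moreover, at this point the corresponding control parameter U(Z) = 1/(Z^{p−2}√(1−Z²)) takes the value U(Z_LE) = (p−1)^{p−1} / ( (p−2)^{p−2} · √((p−1)² − (p−2)²) ); i.e., the saddle-point Lyapunov exponent of the p-twisting-and-turning flow is maximal exactly when χ/Ω = (p−1)^{p−1} / ((p−2)^{p−2}√((p−1)² − (p−2)²)). -/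

import Mathlib

section aux

variable (M : ℕ)

noncomputable def fAux (M : ℕ) : ℝ → ℝ :=
  fun t => ((M:ℝ)+1) * t^(M+1) - ((M:ℝ)+2) * t^(M+2)

lemma fAux_hasDeriv (t : ℝ) :
    HasDerivAt (fAux M) (t^M * (((M:ℝ)+1)^2 - ((M:ℝ)+2)^2 * t)) t := by
  have h1 := (hasDerivAt_pow (M+1) t).const_mul ((M:ℝ)+1)
  have h2 := (hasDerivAt_pow (M+2) t).const_mul ((M:ℝ)+2)
  have := h1.sub h2
  refine this.congr_deriv ?_
  rw [show M + 1 - 1 = M by omega, show M + 2 - 1 = M + 1 by omega]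
  push_cast
  ring

lemma fAux_deriv (t : ℝ) :
    deriv (fAux M) t = t^M * (((M:ℝ)+1)^2 - ((M:ℝ)+2)^2 * t) :=
  (fAux_hasDeriv M t).deriv

lemma fAux_mono :
    StrictMonoOn (fAux M) (Set.Icc 0 ((((M:ℝ)+1)/((M:ℝ)+2))^2)) := by
  apply strictMonoOn_of_deriv_pos (convex_Icc _ _)
  · exact (Continuous.continuousOn (by unfold fAux; continuity))
  · intro t ht
    rw [interior_Icc, Set.mem_Ioo] at ht
    rw [fAux_deriv]
    have hM2 : (0:ℝ) < (M:ℝ)+2 := by positivity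
    have : ((M:ℝ)+2)^2 * t < ((M:ℝ)+1)^2 := by
      have := ht.2
      rw [div_pow, lt_div_iff₀ (by positivity)] at this
      nlinarith
    exact mul_pos (pow_pos ht.1 M) (by linarith)

lemma fAux_anti :
    StrictAntiOn (fAux M) (Set.Icc ((((M:ℝ)+1)/((M:ℝ)+2))^2) 1) := by
  apply strictAntiOn_of_deriv_neg (convex_Icc _ _)
  · exact (Continuous.continuousOn (by unfold fAux; continuity))
  · intro t ht
    rw [interior_Icc, Set.mem_Ioo] at ht
    rw [fAux_deriv]
    have hM2 : (0:ℝ) < (M:ℝ)+2 := by positivity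
    have htpos : 0 < t := lt_of_le_of_lt (by positivity) ht.1
    have : ((M:ℝ)+1)^2 < ((M:ℝ)+2)^2 * t := by
      have := ht.1
      rw [div_pow, div_lt_iff₀ (by positivity)] at this
      nlinarith
    exact mul_neg_of_pos_of_neg (pow_pos htpos M) (by linarith)

end aux

theorem pTaT_max_lyapunov (p : ℕ) (hp : 3 ≤ p)
    (h : ℝ → ℝ)
    (hh : h = fun Z => Z ^ (2 * (p - 2)) * (((p : ℝ) - 2) - ((p : ℝ) - 1) * Z ^ 2))
    (ZLE : ℝ) (hZLE : ZLE = ((p : ℝ) - 2) / ((p : ℝ) - 1)) :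
    ZLE ∈ Set.Ioo (0 : ℝ) 1 ∧
    (∀ Z ∈ Set.Ioo (0 : ℝ) 1, h Z ≤ h ZLE) ∧
    (∀ Z ∈ Set.Ioo (0 : ℝ) 1, h Z = h ZLE → Z = ZLE) ∧
    1 / (ZLE ^ (p - 2) * Real.sqrt (1 - ZLE ^ 2)) =
      ((p : ℝ) - 1) ^ (p - 1) /
        (((p : ℝ) - 2) ^ (p - 2) *
          Real.sqrt (((p : ℝ) - 1) ^ 2 - ((p : ℝ) - 2) ^ 2)) := by
  obtain ⟨M, rfl⟩ : ∃ M, p = M + 3 := ⟨p - 3, by omega⟩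
  have hps : (M + 3 : ℕ) - 2 = M + 1 := by omega
  have hps1 : (M + 3 : ℕ) - 1 = M + 2 := by omega
  have hc2 : ((M+3 : ℕ) : ℝ) - 2 = (M:ℝ) + 1 := by push_cast; ring
  have hc1 : ((M+3 : ℕ) : ℝ) - 1 = (M:ℝ) + 2 := by push_cast; ring
  have hM1 : (0:ℝ) < (M:ℝ)+1 := by positivity
  have hM2 : (0:ℝ) < (M:ℝ)+2 := by positivity
  have hZ : ZLE = ((M:ℝ)+1)/((M:ℝ)+2) := by rw [hZLE, hc1, hc2]
  set tstar : ℝ := (((M:ℝ)+1)/((M:ℝ)+2))^2 with htstar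
  have hZsq : ZLE^2 = tstar := by rw [hZ]
  have hZpos : 0 < ZLE := by rw [hZ]; positivity
  have hZlt1 : ZLE < 1 := by
    rw [hZ, div_lt_one hM2]; linarith
  have hts0 : 0 < tstar := by rw [htstar]; positivity
  have hts1 : tstar < 1 := by
    rw [htstar, div_pow, div_lt_one (by positivity)]
    nlinarith
  have hhf : ∀ Z : ℝ, h Z = fAux M (Z^2) := by
    intro Z
    rw [hh]
    simp only [hps, hc1, hc2, fAux]
    rw [show 2 * (M+1) = (M+1)*2 by ring, pow_mul]
    ring
  have key : ∀ Z ∈ Set.Ioo (0:ℝ) 1, fAux M (Z^2) ≤ fAux M tstar ∧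
      (fAux M (Z^2) = fAux M tstar → Z^2 = tstar) := by
    intro Z hZm
    obtain ⟨hZ0, hZ1⟩ := hZm
    have hsq0 : 0 ≤ Z^2 := sq_nonneg Z
    have hsq1 : Z^2 ≤ 1 := by nlinarith
    rcases lt_trichotomy (Z^2) tstar with hlt | heq | hgt
    · have := fAux_mono M (Set.mem_Icc.mpr ⟨hsq0, le_of_lt hlt⟩)
        (Set.mem_Icc.mpr ⟨le_of_lt hts0, le_refl _⟩) hlt
      exact ⟨le_of_lt this, fun he => absurd he (ne_of_lt this)⟩
    · exact ⟨le_of_eq (by rw [heq]), fun _ => heq⟩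
    · have := fAux_anti M (Set.mem_Icc.mpr ⟨le_refl _, le_of_lt hts1⟩)
        (Set.mem_Icc.mpr ⟨le_of_lt hgt, hsq1⟩) hgt
      exact ⟨le_of_lt this, fun he => absurd he (ne_of_lt this)⟩
  refine ⟨⟨hZpos, hZlt1⟩, ?_, ?_, ?_⟩
  · intro Z hZm
    rw [hhf Z, hhf ZLE, hZsq]
    exact (key Z hZm).1
  · intro Z hZm heq
    rw [hhf Z, hhf ZLE, hZsq] at heq
    have hsq := (key Z hZm).2 heq
    rw [← hZsq] at hsq
    have := hZm.1
    nlinarith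
  · rw [hps, hps1, hc1, hc2, hZ]
    have h1 : (1:ℝ) - (((M:ℝ)+1)/((M:ℝ)+2))^2
        = (((M:ℝ)+2)^2 - ((M:ℝ)+1)^2) / ((M:ℝ)+2)^2 := by
      field_simp
    rw [h1, Real.sqrt_div (by nlinarith) _, Real.sqrt_sq hM2.le, div_pow]
    have hs : 0 < Real.sqrt (((M:ℝ)+2)^2 - ((M:ℝ)+1)^2) :=
      Real.sqrt_pos.mpr (by nlinarith)
    field_simp
    ring
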